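/- The function Ψ tends to −∞ as ρ → 0⁺; that is, for every K > 0 there exists δ > 0 such that Ψ(ρ) < −K for all ρ with 0 < ρ < δ. -/

import Mathlib

open intervalIntegral MeasureTheory Set Real


/-- The relative pressure potential `G(ρ) = ρ ∫_{ρ̄}^{ρ} s⁻²(p(s) - p̄) ds`
    with `p(s) = a s^γ`. -/
noncomputable def Gfun (a γ ρb ρ : ℝ) : ℝ :=
  ρ * ∫ s in ρb..ρ, (a * s ^ γ - a * ρb ^ γ) / s ^ 2

/-- Kanel''s function `Ψ(ρ) = ∫_{ρ̄}^{ρ} √(G(s)) / s^{3/2} ds`. -/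
noncomputable def PsiFun (a γ ρb ρ : ℝ) : ℝ :=
  ∫ s in ρb..ρ, Real.sqrt (Gfun a γ ρb s) / s ^ ((3 : ℝ) / 2)

lemma ftilde_contOn (a γ ρb : ℝ) {s : Set ℝ} (hs : ∀ x ∈ s, x ≠ 0) :
    ContinuousOn (fun t : ℝ => (a * ρb ^ γ - a * t ^ γ) / t ^ 2) s := by
  apply ContinuousOn.div
  · exact continuousOn_const.sub (continuousOn_const.mul (fun x hx =>
      (Real.continuousAt_rpow_const x γ (Or.inl (hs x hx))).continuousWithinAt))
  · exact (continuous_pow 2).continuousOn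
  · exact fun x hx => pow_ne_zero 2 (hs x hx)

lemma Gfun_lb (a γ ρb : ℝ) (ha : 0 < a) (hγ : 1 ≤ γ) (hρb : 0 < ρb)
    {s : ℝ} (hs : 0 < s) (hs4 : s ≤ ρb / 4) :
    (a * ρb ^ γ - a * (ρb / 2) ^ γ) / 2 ≤ Gfun a γ ρb s := by
  set c₀ : ℝ := a * ρb ^ γ - a * (ρb / 2) ^ γ with hc₀
  have hγ0 : 0 < γ := lt_of_lt_of_le one_pos hγ
  have hc₀pos : 0 < c₀ := by
    have : (ρb / 2) ^ γ < ρb ^ γ :=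
      Real.rpow_lt_rpow (by positivity) (by linarith) hγ0
    have h := mul_lt_mul_of_pos_left this ha
    rw [hc₀]; linarith
  -- rewrite Gfun as s * ∫ s..ρb of the positive integrand
  have hrw : Gfun a γ ρb s = s * ∫ t in s..ρb, (a * ρb ^ γ - a * t ^ γ) / t ^ 2 := by
    rw [Gfun, intervalIntegral.integral_symm s ρb, ← intervalIntegral.integral_neg]
    congr 1
    apply intervalIntegral.integral_congr
    intro x _
    ring
  rw [hrw]
  set f : ℝ → ℝ := fun t => (a * ρb ^ γ - a * t ^ γ) / t ^ 2 with hf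
  have hsb2 : s ≤ ρb / 2 := by linarith
  have hb2b : ρb / 2 ≤ ρb := by linarith
  -- integrability pieces
  have hne : ∀ x ∈ Icc s ρb, x ≠ 0 := fun x hx => (lt_of_lt_of_le hs hx.1).ne'
  have hcont : ContinuousOn f (Icc s ρb) := ftilde_contOn a γ ρb hne
  have hint1 : IntervalIntegrable f volume s (ρb / 2) :=
    (hcont.mono (Icc_subset_Icc le_rfl hb2b)).intervalIntegrable_of_Icc hsb2
  have hint2 : IntervalIntegrable f volume (ρb / 2) ρb :=
    (hcont.mono (Icc_subset_Icc hsb2 le_rfl)).intervalIntegrable_of_Icc hb2b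
  -- the tail integral is nonneg
  have htail : 0 ≤ ∫ t in (ρb / 2)..ρb, f t := by
    apply intervalIntegral.integral_nonneg hb2b
    intro t ht
    have ht0 : 0 < t := lt_of_lt_of_le (by linarith) ht.1
    have : a * t ^ γ ≤ a * ρb ^ γ :=
      mul_le_mul_of_nonneg_left (Real.rpow_le_rpow ht0.le ht.2 hγ0.le) ha.le
    exact div_nonneg (by linarith) (by positivity)
  -- lower bound on [s, ρb/2]
  have hlow : ∫ t in s..(ρb / 2), c₀ / t ^ 2 ≤ ∫ t in s..(ρb / 2), f t := by
    apply intervalIntegral.integral_mono_on hsb2 _ hint1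
    · intro t ht
      have ht0 : 0 < t := lt_of_lt_of_le hs ht.1
      have h1 : a * t ^ γ ≤ a * (ρb / 2) ^ γ :=
        mul_le_mul_of_nonneg_left (Real.rpow_le_rpow ht0.le ht.2 hγ0.le) ha.le
      have hle : c₀ ≤ a * ρb ^ γ - a * t ^ γ := by rw [hc₀]; linarith
      have ht2 : (0:ℝ) < t ^ 2 := by positivity
      exact (div_le_div_iff_of_pos_right ht2).mpr hle
    · apply ContinuousOn.intervalIntegrable_of_Icc hsb2
      apply ContinuousOn.div continuousOn_const (continuous_pow 2).continuousOn
      intro x hx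
      exact pow_ne_zero 2 (lt_of_lt_of_le hs hx.1).ne'
  -- compute the explicit integral
  have hcomp : ∫ t in s..(ρb / 2), c₀ / t ^ 2 = c₀ * (1 / s - 1 / (ρb / 2)) := by
    have h0 : (0:ℝ) ∉ Set.uIcc s (ρb / 2) := by
      rw [Set.uIcc_of_le hsb2]
      intro h
      exact absurd h.1 (not_le.mpr hs)
    have : ∫ t in s..(ρb / 2), c₀ / t ^ 2 = c₀ * ∫ t in s..(ρb / 2), (t : ℝ) ^ (-2 : ℤ) := by
      rw [← intervalIntegral.integral_const_mul]
      apply intervalIntegral.integral_congr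
      intro x hx
      have hx0 : x ≠ 0 := by intro h; exact h0 (h ▸ hx)
      show c₀ / x ^ 2 = c₀ * x ^ (-2 : ℤ)
      rw [zpow_neg, div_eq_mul_inv]
      norm_num
    rw [this, integral_zpow (Or.inr ⟨by norm_num, h0⟩)]
    norm_num
    left; ring
  have hkey : c₀ / (2 * s) ≤ ∫ t in s..ρb, f t := by
    rw [← intervalIntegral.integral_add_adjacent_intervals hint1 hint2]
    have h4 : 1 / (ρb / 2) ≤ 1 / (2 * s) :=
      one_div_le_one_div_of_le (by positivity) (by linarith)
    have h5 : (1:ℝ) / (2 * s) ≤ 1 / s - 1 / (ρb / 2) := by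
      have hss : (1:ℝ) / s = 2 * (1 / (2 * s)) := by field_simp
      linarith
    have h6 : c₀ / (2 * s) ≤ c₀ * (1 / s - 1 / (ρb / 2)) := by
      calc c₀ / (2 * s) = c₀ * (1 / (2 * s)) := by ring
        _ ≤ c₀ * (1 / s - 1 / (ρb / 2)) := mul_le_mul_of_nonneg_left h5 hc₀pos.le
    linarith [hcomp ▸ hlow, htail]
  calc c₀ / 2 = s * (c₀ / (2 * s)) := by field_simp
    _ ≤ s * ∫ t in s..ρb, f t := by
        apply mul_le_mul_of_nonneg_left hkey hs.le

lemma c0_pos (a γ ρb : ℝ) (ha : 0 < a) (hγ : 1 ≤ γ) (hρb : 0 < ρb) :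
    0 < a * ρb ^ γ - a * (ρb / 2) ^ γ := by
  have h : (ρb / 2) ^ γ < ρb ^ γ :=
    Real.rpow_lt_rpow (by positivity) (by linarith) (lt_of_lt_of_le one_pos hγ)
  have := mul_lt_mul_of_pos_left h ha
  linarith

theorem PsiFun_tendsto_atBot (a γ ρb : ℝ) (ha : 0 < a) (hγ : 1 ≤ γ) (hρb : 0 < ρb) :
    ∀ K : ℝ, 0 < K → ∃ δ : ℝ, 0 < δ ∧ ∀ ρ : ℝ, 0 < ρ → ρ < δ → PsiFun a γ ρb ρ < -K := by
  intro K hK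
  obtain ⟨b4, hb4def⟩ : ∃ x : ℝ, x = ρb / 4 := ⟨_, rfl⟩
  have hb4pos : 0 < b4 := by rw [hb4def]; positivity
  have hb4lt : b4 < ρb := by rw [hb4def]; linarith
  obtain ⟨c₀, hc₀def⟩ : ∃ x : ℝ, x = a * ρb ^ γ - a * (ρb / 2) ^ γ := ⟨_, rfl⟩
  have hc₀pos : 0 < c₀ := hc₀def ▸ c0_pos a γ ρb ha hγ hρb
  obtain ⟨c₁, hc₁def⟩ : ∃ x : ℝ, x = Real.sqrt (c₀ / 2) := ⟨_, rfl⟩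
  have hc₁pos : 0 < c₁ := by
    rw [hc₁def]; exact Real.sqrt_pos.mpr (half_pos hc₀pos)
  obtain ⟨e, hedef⟩ : ∃ x : ℝ, x = -(1 : ℝ) / 2 := ⟨_, rfl⟩
  obtain ⟨C, hCdef⟩ : ∃ x : ℝ, x = 2 * b4 ^ e := ⟨_, rfl⟩
  have hCpos : 0 < C := by
    have := Real.rpow_pos_of_pos hb4pos e
    rw [hCdef]; linarith
  obtain ⟨M, hMdef⟩ : ∃ x : ℝ, x = (K / c₁ + C) / 2 + 1 := ⟨_, rfl⟩
  have hMpos : 0 < M := by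
    have h1 : 0 < K / c₁ := div_pos hK hc₁pos
    rw [hMdef]; linarith
  refine ⟨min b4 (1 / M ^ 2), lt_min hb4pos (by positivity), ?_⟩
  intro ρ hρ hρδ
  have hρb4 : ρ < b4 := lt_of_lt_of_le hρδ (min_le_left _ _)
  have hρM : ρ < 1 / M ^ 2 := lt_of_lt_of_le hρδ (min_le_right _ _)
  have hρρb : ρ ≤ ρb := by linarith
  obtain ⟨g, hgdef⟩ : ∃ g' : ℝ → ℝ,
      g' = fun s => Real.sqrt (Gfun a γ ρb s) / s ^ ((3 : ℝ) / 2) := ⟨_, rfl⟩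
  -- continuity of g on Icc ρ ρb
  have hcontG : ContinuousOn (fun x => Gfun a γ ρb x) (Icc ρ ρb) := by
    have hne : ∀ x ∈ Icc ρ ρb, x ≠ 0 := fun x hx => (lt_of_lt_of_le hρ hx.1).ne'
    have hfint : IntervalIntegrable (fun t : ℝ => (a * t ^ γ - a * ρb ^ γ) / t ^ 2)
        volume ρ ρb := by
      apply ContinuousOn.intervalIntegrable_of_Icc hρρb
      apply ContinuousOn.div
      · exact (continuousOn_const.mul (fun x hx =>
          (Real.continuousAt_rpow_const x γ (Or.inl (hne x hx))).continuousWithinAt)).sub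
          continuousOn_const
      · exact (continuous_pow 2).continuousOn
      · exact fun x hx => pow_ne_zero 2 (hne x hx)
    have hF : ContinuousOn
        (fun x => ∫ t in ρb..x, (a * t ^ γ - a * ρb ^ γ) / t ^ 2) (Icc ρ ρb) := by
      have := intervalIntegral.continuousOn_primitive_interval' hfint
        (a := ρb) (by rw [Set.uIcc_of_le hρρb]; exact ⟨hρρb, le_rfl⟩)
      rwa [Set.uIcc_of_le hρρb] at this
    exact continuousOn_id.mul hF
  have hcontg : ContinuousOn g (Icc ρ ρb) := by
    rw [hgdef]
    apply ContinuousOn.div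
    · exact Real.continuous_sqrt.comp_continuousOn hcontG
    · exact fun x hx => (Real.continuousAt_rpow_const x _
        (Or.inl (lt_of_lt_of_le hρ hx.1).ne')).continuousWithinAt
    · exact fun x hx => (Real.rpow_pos_of_pos (lt_of_lt_of_le hρ hx.1) _).ne'
  have hint1 : IntervalIntegrable g volume ρ b4 :=
    (hcontg.mono (Icc_subset_Icc le_rfl hb4lt.le)).intervalIntegrable_of_Icc hρb4.le
  have hint2 : IntervalIntegrable g volume b4 ρb :=
    (hcontg.mono (Icc_subset_Icc hρb4.le le_rfl)).intervalIntegrable_of_Icc hb4lt.le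
  -- tail nonneg
  have htail : 0 ≤ ∫ s in b4..ρb, g s := by
    apply intervalIntegral.integral_nonneg hb4lt.le
    intro s hs
    have hs0 : 0 < s := lt_of_lt_of_le hb4pos hs.1
    rw [hgdef]
    exact div_nonneg (Real.sqrt_nonneg _) (Real.rpow_pos_of_pos hs0 _).le
  -- lower bound on head
  have hlow : ∫ s in ρ..b4, c₁ * s ^ (-(3 : ℝ) / 2) ≤ ∫ s in ρ..b4, g s := by
    apply intervalIntegral.integral_mono_on hρb4.le _ hint1
    · intro s hs
      have hs0 : 0 < s := lt_of_lt_of_le hρ hs.1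
      have hsb : s ≤ ρb / 4 := hb4def ▸ hs.2
      have hG : c₀ / 2 ≤ Gfun a γ ρb s := by
        rw [hc₀def]; exact Gfun_lb a γ ρb ha hγ hρb hs0 hsb
      have hsq : c₁ ≤ Real.sqrt (Gfun a γ ρb s) := by
        rw [hc₁def]; exact Real.sqrt_le_sqrt hG
      have hrp : s ^ (-(3 : ℝ) / 2) = (s ^ ((3 : ℝ) / 2))⁻¹ := by
        rw [← Real.rpow_neg hs0.le]; norm_num
      have hden : 0 < s ^ ((3 : ℝ) / 2) := Real.rpow_pos_of_pos hs0 _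
      rw [hgdef]
      calc c₁ * s ^ (-(3 : ℝ) / 2) = c₁ / s ^ ((3 : ℝ) / 2) := by rw [hrp]; ring
        _ ≤ Real.sqrt (Gfun a γ ρb s) / s ^ ((3 : ℝ) / 2) :=
            (div_le_div_iff_of_pos_right hden).mpr hsq
    · apply ContinuousOn.intervalIntegrable_of_Icc hρb4.le
      exact continuousOn_const.mul (fun x hx => (Real.continuousAt_rpow_const x _
        (Or.inl (lt_of_lt_of_le hρ hx.1).ne')).continuousWithinAt)
  -- explicit integral
  have hcomp : ∫ s in ρ..b4, c₁ * s ^ (-(3 : ℝ) / 2) = c₁ * (2 * ρ ^ e - C) := by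
    have h0 : (0 : ℝ) ∉ Set.uIcc ρ b4 := by
      rw [Set.uIcc_of_le hρb4.le]
      intro h
      exact absurd h.1 (not_le.mpr hρ)
    rw [intervalIntegral.integral_const_mul,
      integral_rpow (Or.inr ⟨by norm_num, h0⟩)]
    have he : (-(3 : ℝ) / 2 + 1) = e := by rw [hedef]; norm_num
    rw [he, hCdef, hedef]
    field_simp
    ring
  -- lower bound on ρ ^ e
  have hρe : M < ρ ^ e := by
    have hsq : Real.sqrt ρ < 1 / M := by
      have h1 : (1 : ℝ) / M ^ 2 = (1 / M) ^ 2 := by field_simp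
      have h2 : Real.sqrt ρ < Real.sqrt ((1 / M) ^ 2) :=
        Real.sqrt_lt_sqrt hρ.le (h1 ▸ hρM)
      rwa [Real.sqrt_sq (by positivity)] at h2
    have hρe' : ρ ^ e = (Real.sqrt ρ)⁻¹ := by
      rw [Real.sqrt_eq_rpow, ← Real.rpow_neg hρ.le, hedef]
      norm_num
    rw [hρe']
    have hs0 : 0 < Real.sqrt ρ := Real.sqrt_pos.mpr hρ
    have h := one_div_lt_one_div_of_lt hs0 hsq
    rwa [one_div_one_div, one_div] at h
  -- conclude
  have hJ : K < ∫ s in ρ..ρb, g s := by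
    rw [← intervalIntegral.integral_add_adjacent_intervals hint1 hint2]
    have h2 : K / c₁ + C < 2 * ρ ^ e := by rw [hMdef] at hρe; linarith
    have h3 : K / c₁ * c₁ = K := div_mul_cancel₀ K hc₁pos.ne'
    have h4 := mul_lt_mul_of_pos_right h2 hc₁pos
    have h1 : K < c₁ * (2 * ρ ^ e - C) := by nlinarith [h3, h4]
    linarith [hcomp ▸ hlow, htail]
  have hPsi : PsiFun a γ ρb ρ = -∫ s in ρ..ρb, g s := by
    rw [PsiFun, intervalIntegral.integral_symm, hgdef]
  rw [hPsi]
  linarith
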